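/- Let T_n be the space of upper triangular n×n matrices over a field F, and x a partial permutation matrix. Then x·T_n is the linear subspace of M_n(F) spanned by the elementary matrices E_{ij} for which x has a nonzero entry in position (i, s) with s ≤ j. -/

import Mathlib

/-- A partial permutation matrix: 0-1 entries with at most one nonzero entry
in each row and each column. -/
def IsPartialPerm {n : ℕ} {F : Type*} [Field F] (x : Matrix (Fin n) (Fin n) F) : Prop :=
  (∀ i j, x i j = 0 ∨ x i j = 1) ∧
  (∀ i j j', x i j ≠ 0 → x i j' ≠ 0 → j = j') ∧
  (∀ i i' j, x i j ≠ 0 → x i' j ≠ 0 → i = i')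

/-- The subspace of upper triangular matrices. -/
def upperT (F : Type*) [Field F] (n : ℕ) : Submodule F (Matrix (Fin n) (Fin n) F) where
  carrier := {t | ∀ i j : Fin n, j < i → t i j = 0}
  add_mem' := by
    intro a b ha hb i j hij
    simp [Matrix.add_apply, ha i j hij, hb i j hij]
  zero_mem' := by
    intro i j hij
    simp
  smul_mem' := by
    intro c a ha i j hij
    simp [Matrix.smul_apply, ha i j hij]

theorem xT_spanned (F : Type*) [Field F] (n : ℕ) (x : Matrix (Fin n) (Fin n) F)
    (hx : IsPartialPerm x) :
    (upperT F n).map (LinearMap.mulLeft F x) =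
      Submodule.span F {E : Matrix (Fin n) (Fin n) F |
        ∃ i j s : Fin n, s ≤ j ∧ x i s ≠ 0 ∧ E = Matrix.single i j 1} := by
  apply le_antisymm
  · rintro m ⟨t, ht, rfl⟩
    rw [LinearMap.mulLeft_apply, Matrix.matrix_eq_sum_single (x * t)]
    apply Submodule.sum_mem
    intro i _
    apply Submodule.sum_mem
    intro j _
    rcases eq_or_ne ((x * t) i j) 0 with h | h
    · simp [h]
    · rw [show Matrix.single i j ((x * t) i j) = ((x * t) i j) • Matrix.single i j 1 by
        rw [Matrix.smul_single, smul_eq_mul, mul_one]]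
      apply Submodule.smul_mem
      apply Submodule.subset_span
      have : ∃ s, x i s * t s j ≠ 0 := by
        by_contra hc
        push_neg at hc
        exact h (by rw [Matrix.mul_apply]; exact Finset.sum_eq_zero fun s _ => hc s)
      obtain ⟨s, hs⟩ := this
      have hts : t s j ≠ 0 := right_ne_zero_of_mul hs
      have hsle : s ≤ j := le_of_not_gt fun hlt => hts (ht s j hlt)
      exact ⟨i, j, s, hsle, left_ne_zero_of_mul hs, rfl⟩
  · rw [Submodule.span_le]
    rintro E ⟨i, j, s, hsj, hxs, rfl⟩
    refine ⟨Matrix.single s j 1, ?_, ?_⟩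
    · intro a b hba
      rw [Matrix.single]
      simp only [Matrix.of_apply, ite_eq_right_iff, and_imp]
      rintro rfl rfl
      exact absurd hsj (not_le.2 hba)
    · rw [LinearMap.mulLeft_apply]
      ext a b
      rw [Matrix.mul_apply]
      rw [Finset.sum_eq_single s]
      · by_cases hai : a = i
        · subst hai
          have hx1 : x a s = 1 := (hx.1 a s).resolve_left hxs
          by_cases hbj : b = j
          · subst hbj
            simp [Matrix.single, hx1]
          · simp [Matrix.single, Ne.symm hbj]
        · have hxa : x a s = 0 := by
            by_contra hne
            exact hai (hx.2.2 a i s hne hxs)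
          have : Matrix.single i j (1:F) a b = 0 := by
            rw [Matrix.single]
            simp only [Matrix.of_apply, ite_eq_right_iff, and_imp]
            exact fun h _ => absurd h.symm hai
          simp [hxa, this]
      · intro s' _ hs'
        have : Matrix.single s j (1:F) s' b = 0 := by
          rw [Matrix.single]
          simp only [Matrix.of_apply, ite_eq_right_iff, and_imp]
          exact fun h _ => absurd h.symm hs' 
        simp [this]
      · simp
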